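/- Let A ∈ ℝ^{n×n}, B ∈ ℝ^{n×m}, C ∈ ℝ^{p×n}, D ∈ ℝ^{p×m}, let Y ⊆ ℝᵖ be a convex cone, and define the convex process H : ℝⁿ ⇉ ℝⁿ by H(x) = {Ax + Bu : u ∈ ℝᵐ, Cx + Du ∈ Y}. If im[C D] + Y (the sum of the column space of the block matrix [C D] with Y) is a linear subspace of ℝᵖ, then the negative dual process satisfies H⁻(x) = {Aᵀx + Cᵀu : u ∈ Y⁺, Bᵀx + Dᵀu = 0} for every x ∈ ℝⁿ. -/
import Mathlib


open Pointwise Matrix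

namespace ConvexProcessPaper

/-- A convex cone: a nonempty convex set closed under nonnegative scalar multiplication. -/
def IsConvexCone {V : Type*} [AddCommMonoid V] [Module ℝ V] (S : Set V) : Prop :=
  S.Nonempty ∧ Convex ℝ S ∧ ∀ c : ℝ, 0 ≤ c → ∀ x ∈ S, c • x ∈ S

/-- A set is a linear subspace. -/
def IsLinearSubspace {V : Type*} [AddCommGroup V] [Module ℝ V] (S : Set V) : Prop :=
  ∃ W : Submodule ℝ V, (W : Set V) = S

/-- The negative dual process of a set-valued map on ℝⁿ:
p ∈ H⁻(q) ⇔ ⟨p,x⟩ ≥ ⟨q,y⟩ for all (x,y) ∈ gr(H). -/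
def negDual {n : ℕ} (H : (Fin n → ℝ) → Set (Fin n → ℝ)) : (Fin n → ℝ) → Set (Fin n → ℝ) :=
  fun q => {p | ∀ x y, y ∈ H x → q ⬝ᵥ y ≤ p ⬝ᵥ x}

/-- The positive polar cone of a set in ℝᵖ. -/
def posPolar {p : ℕ} (C : Set (Fin p → ℝ)) : Set (Fin p → ℝ) :=
  {y | ∀ x ∈ C, 0 ≤ x ⬝ᵥ y}

set_option maxHeartbeats 2000000 in
theorem key_farkas {n m p : ℕ}
    (C : Matrix (Fin p) (Fin n) ℝ) (D : Matrix (Fin p) (Fin m) ℝ)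
    (Y : Set (Fin p → ℝ)) (hY : IsConvexCone Y)
    (hsub : IsLinearSubspace
      ({v | ∃ (x : Fin n → ℝ) (u : Fin m → ℝ), v = C *ᵥ x + D *ᵥ u} + Y))
    (w : Fin n → ℝ) (s : Fin m → ℝ)
    (hpos : ∀ (x' : Fin n → ℝ) (u' : Fin m → ℝ),
      C *ᵥ x' + D *ᵥ u' ∈ Y → 0 ≤ w ⬝ᵥ x' + s ⬝ᵥ u') :
    ∃ u ∈ posPolar Y, Cᵀ *ᵥ u = w ∧ Dᵀ *ᵥ u = s := by
  obtain ⟨W, hW⟩ := hsub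
  obtain ⟨y₀, hy₀⟩ := hY.1
  have h0Y : (0 : Fin p → ℝ) ∈ Y := by
    simpa using hY.2.2 0 le_rfl y₀ hy₀
  have haddY : ∀ y₁ ∈ Y, ∀ y₂ ∈ Y, y₁ + y₂ ∈ Y := by
    intro y₁ h₁ y₂ h₂
    have hmid : (1/2 : ℝ) • y₁ + (1/2 : ℝ) • y₂ ∈ Y :=
      hY.2.1 h₁ h₂ (by norm_num) (by norm_num) (by norm_num)
    have := hY.2.2 2 (by norm_num) _ hmid
    simpa [smul_add, smul_smul] using this
  -- membership in W
  have hmemW : ∀ q : Fin p → ℝ, q ∈ W ↔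
      ∃ (x : Fin n → ℝ) (u : Fin m → ℝ) (y : Fin p → ℝ),
        y ∈ Y ∧ q = C *ᵥ x + D *ᵥ u + y := by
    intro q
    constructor
    · intro hq
      have : q ∈ ({v | ∃ (x : Fin n → ℝ) (u : Fin m → ℝ), v = C *ᵥ x + D *ᵥ u} + Y) := by
        rw [← hW]; exact hq
      obtain ⟨a, ⟨x, u, rfl⟩, y, hy, rfl⟩ := this
      exact ⟨x, u, y, hy, rfl⟩
    · rintro ⟨x, u, y, hy, rfl⟩
      have : (C *ᵥ x + D *ᵥ u + y)
          ∈ ({v | ∃ (x : Fin n → ℝ) (u : Fin m → ℝ), v = C *ᵥ x + D *ᵥ u} + Y) :=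
        ⟨C *ᵥ x + D *ᵥ u, ⟨x, u, rfl⟩, y, hy, rfl⟩
      rw [← hW] at this; exact this
  -- the value set
  set S : (Fin p → ℝ) → Set ℝ := fun q =>
    {r | ∃ (x : Fin n → ℝ) (u : Fin m → ℝ),
      r = w ⬝ᵥ x + s ⬝ᵥ u ∧ q - (C *ᵥ x + D *ᵥ u) ∈ Y} with hS
  have hSne : ∀ q ∈ W, (S q).Nonempty := by
    intro q hq
    obtain ⟨x, u, y, hy, rfl⟩ := (hmemW q).1 hq
    exact ⟨w ⬝ᵥ x + s ⬝ᵥ u, x, u, rfl, by simpa using hy⟩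
  -- pairing bound
  have hpair : ∀ q : Fin p → ℝ, ∀ r ∈ S q, ∀ r' ∈ S (-q), r + r' ≤ 0 := by
    rintro q r ⟨x₁, u₁, rfl, h₁⟩ r' ⟨x₂, u₂, rfl, h₂⟩
    have hsum : C *ᵥ (-(x₁ + x₂)) + D *ᵥ (-(u₁ + u₂)) ∈ Y := by
      have := haddY _ h₁ _ h₂
      have heq : q - (C *ᵥ x₁ + D *ᵥ u₁) + (-q - (C *ᵥ x₂ + D *ᵥ u₂))
          = C *ᵥ (-(x₁ + x₂)) + D *ᵥ (-(u₁ + u₂)) := by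
        simp [Matrix.mulVec_add, Matrix.mulVec_neg]
        abel
      rwa [heq] at this
    have := hpos _ _ hsum
    simp only [dotProduct_neg, dotProduct_add] at this
    linarith
  have hbdd : ∀ q ∈ W, BddAbove (S q) := by
    intro q hq
    obtain ⟨r', hr'⟩ := hSne (-q) (neg_mem hq)
    exact ⟨-r', fun r hr => by linarith [hpair q r hr r' hr']⟩
  set G : (Fin p → ℝ) → ℝ := fun q => sSup (S q) with hG
  -- G q ≥ each element, for q ∈ W
  have hle : ∀ q ∈ W, ∀ r ∈ S q, r ≤ G q := fun q hq r hr => le_csSup (hbdd q hq) hr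
  -- sub-membership: sums
  have hSadd : ∀ q₁ q₂ : Fin p → ℝ, ∀ r₁ ∈ S q₁, ∀ r₂ ∈ S q₂, r₁ + r₂ ∈ S (q₁ + q₂) := by
    rintro q₁ q₂ r₁ ⟨x₁, u₁, rfl, h₁⟩ r₂ ⟨x₂, u₂, rfl, h₂⟩
    refine ⟨x₁ + x₂, u₁ + u₂, by simp [dotProduct_add]; ring, ?_⟩
    have := haddY _ h₁ _ h₂
    have heq : q₁ - (C *ᵥ x₁ + D *ᵥ u₁) + (q₂ - (C *ᵥ x₂ + D *ᵥ u₂))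
        = q₁ + q₂ - (C *ᵥ (x₁ + x₂) + D *ᵥ (u₁ + u₂)) := by
      simp [Matrix.mulVec_add]; abel
    rwa [heq] at this
  -- scaling of S
  have hSsmul : ∀ (c : ℝ), 0 < c → ∀ q : Fin p → ℝ, ∀ r ∈ S q, c * r ∈ S (c • q) := by
    rintro c hc q r ⟨x, u, rfl, h⟩
    refine ⟨c • x, c • u, by simp [dotProduct_smul, smul_eq_mul]; ring, ?_⟩
    have := hY.2.2 c hc.le _ h
    have heq : c • (q - (C *ᵥ x + D *ᵥ u)) = c • q - (C *ᵥ (c • x) + D *ᵥ (c • u)) := by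
      simp [Matrix.mulVec_smul, smul_sub, smul_add]
    rwa [heq] at this
  -- superadditivity of G on W
  have hGadd : ∀ q₁ ∈ W, ∀ q₂ ∈ W, G q₁ + G q₂ ≤ G (q₁ + q₂) := by
    intro q₁ hq₁ q₂ hq₂
    have h12 : q₁ + q₂ ∈ W := add_mem hq₁ hq₂
    have h1 : G q₁ ≤ G (q₁ + q₂) - G q₂ := by
      refine csSup_le (hSne q₁ hq₁) (fun r₁ hr₁ => ?_)
      have h2 : G q₂ ≤ G (q₁ + q₂) - r₁ := by
        refine csSup_le (hSne q₂ hq₂) (fun r₂ hr₂ => ?_)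
        have := hle _ h12 _ (hSadd q₁ q₂ r₁ hr₁ r₂ hr₂)
        linarith
      linarith
    linarith
  -- homogeneity of G on W
  have hGhom : ∀ c : ℝ, 0 < c → ∀ q ∈ W, G (c • q) = c * G q := by
    intro c hc q hq
    have hcq : c • q ∈ W := Submodule.smul_mem W c hq
    have h1 : G (c • q) ≤ c * G q := by
      refine csSup_le (hSne _ hcq) (fun r hr => ?_)
      have hmem := hSsmul c⁻¹ (by positivity) _ _ hr
      rw [smul_smul, inv_mul_cancel₀ hc.ne', one_smul] at hmem
      have := hle q hq _ hmem
      calc r = c * (c⁻¹ * r) := by field_simp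
        _ ≤ c * G q := by nlinarith
    have h2 : c * G q ≤ G (c • q) := by
      have : G q ≤ c⁻¹ * G (c • q) := by
        refine csSup_le (hSne q hq) (fun r hr => ?_)
        have := hle _ hcq _ (hSsmul c hc q r hr)
        calc r = c⁻¹ * (c * r) := by field_simp
          _ ≤ c⁻¹ * G (c • q) := by
            have : (0:ℝ) < c⁻¹ := by positivity
            nlinarith
      calc c * G q ≤ c * (c⁻¹ * G (c • q)) := by nlinarith
        _ = G (c • q) := by field_simp
    linarith
  -- G 0 ≤ 0
  have hG0 : G 0 ≤ 0 := by
    refine csSup_le (hSne 0 (zero_mem W)) ?_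
    rintro r ⟨x, u, rfl, h⟩
    have hmem : C *ᵥ (-x) + D *ᵥ (-u) ∈ Y := by
      have heq : (0 : Fin p → ℝ) - (C *ᵥ x + D *ᵥ u) = C *ᵥ (-x) + D *ᵥ (-u) := by
        simp [Matrix.mulVec_neg]; abel
      rwa [heq] at h
    have := hpos _ _ hmem
    simp only [dotProduct_neg] at this
    linarith
  -- Hahn–Banach
  set N : ↥W → ℝ := fun q => -G q.val with hNdef
  have N_hom : ∀ c : ℝ, 0 < c → ∀ x : ↥W, N (c • x) = c * N x := by
    intro c hc x
    have : ((c • x : ↥W) : Fin p → ℝ) = c • (x : Fin p → ℝ) := rfl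
    simp only [hNdef, this, hGhom c hc _ x.2]
    ring
  have N_add : ∀ x y : ↥W, N (x + y) ≤ N x + N y := by
    intro x y
    have : ((x + y : ↥W) : Fin p → ℝ) = (x : Fin p → ℝ) + y := rfl
    simp only [hNdef, this]
    have := hGadd _ x.2 _ y.2
    linarith
  have hN0 : (0:ℝ) ≤ N 0 := by
    simp only [hNdef]
    have : ((0 : ↥W) : Fin p → ℝ) = 0 := rfl
    rw [this]
    linarith
  obtain ⟨g, -, hg⟩ := exists_extension_of_le_sublinear
    (⟨⊥, 0⟩ : ↥W →ₗ.[ℝ] ℝ) N N_hom N_add (fun x => by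
      have hx0 : (x : ↥W) = 0 := (Submodule.mem_bot ℝ).mp x.2
      show (0 : ↥(⊥ : Submodule ℝ ↥W) →ₗ[ℝ] ℝ) x ≤ N x
      rw [hx0, LinearMap.zero_apply]
      exact hN0)
  obtain ⟨W', hWc⟩ := Submodule.exists_isCompl W
  set ℓ : (Fin p → ℝ) →ₗ[ℝ] ℝ := (-g).comp (W.linearProjOfIsCompl W' hWc) with hℓdef
  have hℓW : ∀ q : Fin p → ℝ, ∀ hq : q ∈ W, G q ≤ ℓ q := by
    intro q hq
    have h1 : (W.linearProjOfIsCompl W' hWc) q = ⟨q, hq⟩ :=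
      Submodule.linearProjOfIsCompl_apply_left hWc ⟨q, hq⟩
    have h2 := hg ⟨q, hq⟩
    simp only [hNdef] at h2
    simp only [hℓdef, LinearMap.comp_apply, h1, LinearMap.neg_apply]
    linarith
  -- the dual vector
  set u : Fin p → ℝ := fun i => ℓ (fun j => if i = j then 1 else 0) with hudef
  have hdot : ∀ q : Fin p → ℝ, ℓ q = q ⬝ᵥ u := by
    intro q
    rw [LinearMap.pi_apply_eq_sum_univ ℓ q]
    simp [dotProduct, hudef, smul_eq_mul]
  -- image equality
  have himg : ∀ (x : Fin n → ℝ) (u' : Fin m → ℝ),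
      (C *ᵥ x + D *ᵥ u') ⬝ᵥ u = w ⬝ᵥ x + s ⬝ᵥ u' := by
    intro x u'
    set q : Fin p → ℝ := C *ᵥ x + D *ᵥ u' with hqdef
    have hq : q ∈ W := (hmemW q).2 ⟨x, u', 0, h0Y, by simp [hqdef]⟩
    have hqn : -q ∈ W := neg_mem hq
    have hm1 : w ⬝ᵥ x + s ⬝ᵥ u' ∈ S q := ⟨x, u', rfl, by simp [hqdef, h0Y]⟩
    have hm2 : w ⬝ᵥ (-x) + s ⬝ᵥ (-u') ∈ S (-q) := by
      refine ⟨-x, -u', rfl, ?_⟩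
      have : -q - (C *ᵥ (-x) + D *ᵥ (-u')) = 0 := by
        simp [hqdef, Matrix.mulVec_neg]; abel
      rw [this]; exact h0Y
    have hle1 : w ⬝ᵥ x + s ⬝ᵥ u' ≤ ℓ q := le_trans (hle q hq _ hm1) (hℓW q hq)
    have hle2 : w ⬝ᵥ (-x) + s ⬝ᵥ (-u') ≤ ℓ (-q) := le_trans (hle _ hqn _ hm2) (hℓW _ hqn)
    have hneg : ℓ (-q) = -ℓ q := by rw [map_neg]
    simp only [dotProduct_neg, hneg] at hle2
    rw [← hdot q]
    linarith
  refine ⟨u, ?_, ?_, ?_⟩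
  · intro y hy
    have hyW : y ∈ W := (hmemW y).2 ⟨0, 0, y, hy, by simp⟩
    have h0S : (0:ℝ) ∈ S y := ⟨0, 0, by simp, by simpa using hy⟩
    have := le_trans (hle y hyW 0 h0S) (hℓW y hyW)
    rw [hdot y] at this
    exact this
  · funext i
    have := himg (fun j => if i = j then 1 else 0) 0
    simp only [Matrix.mulVec_zero, dotProduct_zero, add_zero] at this
    have hl : (C *ᵥ fun j => if i = j then 1 else 0) ⬝ᵥ u = (Cᵀ *ᵥ u) i := by
      simp [Matrix.mulVec, dotProduct, Matrix.transpose_apply,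
        Finset.sum_ite_eq, mul_comm]
    have hr : (w ⬝ᵥ fun j => if i = j then 1 else 0) = w i := by
      simp [dotProduct]
    rw [hl, hr] at this
    exact this
  · funext i
    have := himg 0 (fun j => if i = j then 1 else 0)
    simp only [Matrix.mulVec_zero, dotProduct_zero, zero_add] at this
    have hl : (D *ᵥ fun j => if i = j then 1 else 0) ⬝ᵥ u = (Dᵀ *ᵥ u) i := by
      simp [Matrix.mulVec, dotProduct, Matrix.transpose_apply,
        Finset.sum_ite_eq, mul_comm]
    have hr : (s ⬝ᵥ fun j => if i = j then 1 else 0) = s i := by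
      simp [dotProduct]
    rw [hl, hr] at this
    exact this

/-- dual of the constrained linear process
H(x) = {Ax + Bu : Cx + Du ∈ Y}, when im[C D] + Y is a subspace, is
H⁻(x) = {Aᵀx + Cᵀu : u ∈ Y⁺, Bᵀx + Dᵀu = 0}. -/
theorem negDual_of_constrained_linear {n m p : ℕ}
    (A : Matrix (Fin n) (Fin n) ℝ) (B : Matrix (Fin n) (Fin m) ℝ)
    (C : Matrix (Fin p) (Fin n) ℝ) (D : Matrix (Fin p) (Fin m) ℝ)
    (Y : Set (Fin p → ℝ)) (hY : IsConvexCone Y)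
    (H : (Fin n → ℝ) → Set (Fin n → ℝ))
    (hH : ∀ x, H x = {y | ∃ u : Fin m → ℝ, y = A *ᵥ x + B *ᵥ u ∧ C *ᵥ x + D *ᵥ u ∈ Y})
    (hsub : IsLinearSubspace
      ({v | ∃ (x : Fin n → ℝ) (u : Fin m → ℝ), v = C *ᵥ x + D *ᵥ u} + Y)) :
    ∀ x : Fin n → ℝ, negDual H x =
      {z | ∃ u ∈ posPolar Y, z = Aᵀ *ᵥ x + Cᵀ *ᵥ u ∧ Bᵀ *ᵥ x + Dᵀ *ᵥ u = 0} := by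
  intro x
  have dotT : ∀ {k l : ℕ} (M : Matrix (Fin k) (Fin l) ℝ) (a : Fin k → ℝ) (b : Fin l → ℝ),
      (Mᵀ *ᵥ a) ⬝ᵥ b = a ⬝ᵥ (M *ᵥ b) := by
    intro k l M a b
    rw [Matrix.mulVec_transpose, ← Matrix.dotProduct_mulVec]
  ext z
  constructor
  · intro hz
    have hpos : ∀ (x' : Fin n → ℝ) (u' : Fin m → ℝ), C *ᵥ x' + D *ᵥ u' ∈ Y →
        0 ≤ (z - Aᵀ *ᵥ x) ⬝ᵥ x' + (-(Bᵀ *ᵥ x)) ⬝ᵥ u' := by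
      intro x' u' hYm
      have hmem : A *ᵥ x' + B *ᵥ u' ∈ H x' := by
        rw [hH]; exact ⟨u', rfl, hYm⟩
      have h1 := hz x' _ hmem
      rw [dotProduct_add] at h1
      have e1 : (Aᵀ *ᵥ x) ⬝ᵥ x' = x ⬝ᵥ (A *ᵥ x') := dotT A x x'
      have e2 : (Bᵀ *ᵥ x) ⬝ᵥ u' = x ⬝ᵥ (B *ᵥ u') := dotT B x u'
      rw [sub_dotProduct, neg_dotProduct, e1, e2]
      linarith
    obtain ⟨u, hu, hCu, hDu⟩ := key_farkas C D Y hY hsub _ _ hpos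
    refine ⟨u, hu, ?_, ?_⟩
    · rw [hCu]; abel
    · rw [hDu]; abel
  · rintro ⟨u, hu, rfl, hBD⟩
    intro x' y hy
    rw [hH] at hy
    obtain ⟨u', rfl, hYm⟩ := hy
    have hpol : 0 ≤ (C *ᵥ x' + D *ᵥ u') ⬝ᵥ u := hu _ hYm
    have e1 : (Aᵀ *ᵥ x) ⬝ᵥ x' = x ⬝ᵥ (A *ᵥ x') := dotT A x x'
    have e2 : (Cᵀ *ᵥ u) ⬝ᵥ x' = u ⬝ᵥ (C *ᵥ x') := dotT C u x'
    have e3 : (Bᵀ *ᵥ x) ⬝ᵥ u' = x ⬝ᵥ (B *ᵥ u') := dotT B x u'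
    have e4 : (Dᵀ *ᵥ u) ⬝ᵥ u' = u ⬝ᵥ (D *ᵥ u') := dotT D u u'
    have hsum : (Bᵀ *ᵥ x) ⬝ᵥ u' + (Dᵀ *ᵥ u) ⬝ᵥ u' = 0 := by
      rw [← add_dotProduct, hBD, zero_dotProduct]
    have hpol' : 0 ≤ u ⬝ᵥ (C *ᵥ x') + u ⬝ᵥ (D *ᵥ u') := by
      rw [← dotProduct_add]
      rw [dotProduct_comm]
      exact hpol
    rw [dotProduct_add, add_dotProduct]
    linarith [e1, e2, e3, e4, hsum, hpol']

end ConvexProcessPaper
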